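/- Let τ > 1 and θ > 0 be real numbers and let T be a positive integer. Suppose real sequences H, V, S, I (indexed by t = 1,…,T, with V[0] given) satisfy the discretized LIF recursion with V_reset = 0 and V_th = 1: H[t] = V[t−1] + (1/τ)(−V[t−1] + I[t]); S[t] = Fire(H[t] − 1); and V[t] = 0 if H[t] ≥ 1, V[t] = H[t] if 0 ≤ H[t] < 1, V[t] = 0 if H[t] < 0. Define the rescaled sequences Ĥ[t] := θτ·H[t], V̂[t] := θ(τ−1)·V[t], Î[t] := θ·I[t], and the rescaled threshold V̂_th^τ := θτ. Then for every t: (a) Ĥ[t] = V̂[t−1] + Î[t]; (b) 2·S[t] = Sign(Ĥ[t] − V̂_th^τ) + 1; and (c) V̂[t] = 0 if Ĥ[t] ≥ V̂_th^τ, V̂[t] = ((τ−1)/τ)·Ĥ[t] if 0 ≤ Ĥ[t] < V̂_th^τ, and V̂[t] = 0 if Ĥ[t] < 0. -/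

import Mathlib

/-- Heaviside step function: `Fire x = 1` if `x ≥ 0`, else `0`. -/
noncomputable def Fire (x : ℝ) : ℝ := if 0 ≤ x then 1 else 0

/-- Sign function: `Sign x = 1` if `x ≥ 0`, else `-1`. -/
noncomputable def Sign (x : ℝ) : ℝ := if 0 ≤ x then 1 else -1

/-- Theorem 1 of the paper (exact real rescaling of the discretized LIF recursion with
`V_reset = 0`, `V_th = 1`): with `Ĥ[t] = θτ·H[t]`, `V̂[t] = θ(τ-1)·V[t]`, `Î[t] = θ·I[t]`
and threshold `V̂_th^τ = θτ`, the recursion takes the rescaled form (a), (b), (c). -/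
theorem stmt0 (τ θ : ℝ) (hτ : 1 < τ) (hθ : 0 < θ) (T : ℕ) (hT : 0 < T)
    (H V S I : ℕ → ℝ)
    (hH : ∀ t, 1 ≤ t → t ≤ T → H t = V (t - 1) + (1 / τ) * (-(V (t - 1)) + I t))
    (hS : ∀ t, 1 ≤ t → t ≤ T → S t = Fire (H t - 1))
    (hV : ∀ t, 1 ≤ t → t ≤ T →
      V t = if 1 ≤ H t then 0 else if 0 ≤ H t then H t else 0) :
    ∀ t, 1 ≤ t → t ≤ T →
      (θ * τ * H t = θ * (τ - 1) * V (t - 1) + θ * I t) ∧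
      (2 * S t = Sign (θ * τ * H t - θ * τ) + 1) ∧
      (θ * (τ - 1) * V t =
        if θ * τ ≤ θ * τ * H t then 0
        else if 0 ≤ θ * τ * H t then ((τ - 1) / τ) * (θ * τ * H t)
        else 0) := by
  intro t h1 h2
  have hτ0 : (0:ℝ) < τ := lt_trans one_pos hτ
  have hτ0' : τ ≠ 0 := ne_of_gt hτ0
  have hθτ : (0:ℝ) < θ * τ := mul_pos hθ hτ0
  refine ⟨?_, ?_, ?_⟩
  · rw [hH t h1 h2]; field_simp; ring
  · rw [hS t h1 h2, Fire, Sign]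
    have hiff : (0 ≤ H t - 1) ↔ (0 ≤ θ * τ * H t - θ * τ) := by
      constructor
      · intro h
        nlinarith
      · intro h
        nlinarith
    by_cases h : 0 ≤ H t - 1
    · rw [if_pos h, if_pos (hiff.mp h)]; ring
    · rw [if_neg h, if_neg (fun hc => h (hiff.mpr hc))]; ring
  · rw [hV t h1 h2]
    have h1iff : (1 ≤ H t) ↔ (θ * τ ≤ θ * τ * H t) := by
      constructor <;> intro h <;> nlinarith
    have h0iff : (0 ≤ H t) ↔ (0 ≤ θ * τ * H t) := by
      constructor <;> intro h <;> nlinarith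
    by_cases ha : 1 ≤ H t
    · rw [if_pos ha, if_pos (h1iff.mp ha)]; ring
    · rw [if_neg ha, if_neg (fun hc => ha (h1iff.mpr hc))]
      by_cases hb : 0 ≤ H t
      · rw [if_pos hb, if_pos (h0iff.mp hb)]; field_simp
      · rw [if_neg hb, if_neg (fun hc => hb (h0iff.mpr hc))]; ring
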